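/- For every integer n ≥ 0 and every real x > 0, the ratio of modified spherical Bessel functions of the first kind satisfies i_{n+1}(x)/i_n(x) < x/((n+1) + √((n+1)² + x²)). -/

import Mathlib

open Real Finset

/-- Modified spherical Bessel function of the second kind `k_n`, explicit closed form. -/
noncomputable def kBes (n : ℕ) (x : ℝ) : ℝ :=
  (Real.exp (-x) / x) *
    ∑ l ∈ Finset.range (n + 1),
      (Nat.factorial (n + l) : ℝ) /
        ((Nat.factorial l : ℝ) * (Nat.factorial (n - l) : ℝ) * (2 * x) ^ l)

/-- Modified spherical Bessel function of the first kind `i_n`, explicit closed form. -/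
noncomputable def iBes (n : ℕ) (x : ℝ) : ℝ :=
  (1 / (2 * x)) *
    (Real.exp x *
        ∑ l ∈ Finset.range (n + 1),
          (-1 : ℝ) ^ l * (Nat.factorial (n + l) : ℝ) /
            ((Nat.factorial l : ℝ) * (Nat.factorial (n - l) : ℝ) * (2 * x) ^ l)
      + (-1 : ℝ) ^ (n + 1) * Real.exp (-x) *
        ∑ l ∈ Finset.range (n + 1),
          (Nat.factorial (n + l) : ℝ) /
            ((Nat.factorial l : ℝ) * (Nat.factorial (n - l) : ℝ) * (2 * x) ^ l))

namespace IBesAux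


noncomputable def uI (n : ℕ) (x : ℝ) : ℝ := ∫ t in (-1:ℝ)..1, Real.exp (x*t) * (1-t^2)^n
noncomputable def vI (n : ℕ) (x : ℝ) : ℝ := ∫ t in (-1:ℝ)..1, t * (Real.exp (x*t) * (1-t^2)^n)
noncomputable def wI (n : ℕ) (x : ℝ) : ℝ := ∫ t in (-1:ℝ)..1, t^2 * (Real.exp (x*t) * (1-t^2)^n)

lemma intg1 (n : ℕ) (x : ℝ) (a b : ℝ) :
    IntervalIntegrable (fun t : ℝ => Real.exp (x*t) * (1-t^2)^n) MeasureTheory.volume a b :=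
  (by fun_prop : Continuous fun t : ℝ => Real.exp (x*t) * (1-t^2)^n).intervalIntegrable a b
lemma intg2 (n : ℕ) (x : ℝ) (a b : ℝ) :
    IntervalIntegrable (fun t : ℝ => t * (Real.exp (x*t) * (1-t^2)^n)) MeasureTheory.volume a b :=
  (by fun_prop : Continuous fun t : ℝ => t * (Real.exp (x*t) * (1-t^2)^n)).intervalIntegrable a b
lemma intg3 (n : ℕ) (x : ℝ) (a b : ℝ) :
    IntervalIntegrable (fun t : ℝ => t^2 * (Real.exp (x*t) * (1-t^2)^n)) MeasureTheory.volume a b :=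
  (by fun_prop : Continuous fun t : ℝ => t^2 * (Real.exp (x*t) * (1-t^2)^n)).intervalIntegrable a b

lemma hd1 (n : ℕ) (x t : ℝ) :
    HasDerivAt (fun t : ℝ => Real.exp (x*t) * (1-t^2)^(n+1))
      (x * (Real.exp (x*t) * (1-t^2)^(n+1)) - (2*((n:ℝ)+1)) * (t * (Real.exp (x*t) * (1-t^2)^n))) t := by
  have h1 : HasDerivAt (fun t : ℝ => Real.exp (x*t)) (x * Real.exp (x*t)) t := by
    simpa [mul_comm, Function.comp_def] using (Real.hasDerivAt_exp (x*t)).comp t ((hasDerivAt_id t).const_mul x)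
  have h2 : HasDerivAt (fun t : ℝ => (1-t^2)^(n+1))
      (((n:ℝ)+1) * (1-t^2)^n * (-(2*t))) t := by
    have hin : HasDerivAt (fun t : ℝ => 1-t^2) (-(2*t)) t := by
      simpa using ((hasDerivAt_pow 2 t).const_sub 1)
    simpa using (hin.fun_pow (n+1))
  have := h1.fun_mul h2
  exact this.congr_deriv (by ring)

lemma hd2 (n : ℕ) (x t : ℝ) :
    HasDerivAt (fun t : ℝ => t * (Real.exp (x*t) * (1-t^2)^(n+1)))
      ((Real.exp (x*t) * (1-t^2)^(n+1)) + x * (t * (Real.exp (x*t) * (1-t^2)^(n+1)))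
        - (2*((n:ℝ)+1)) * (t^2 * (Real.exp (x*t) * (1-t^2)^n))) t := by
  have := (hasDerivAt_id t).fun_mul (hd1 n x t)
  simp only [id] at this
  exact this.congr_deriv (by ring)

lemma parts1 (n : ℕ) (x : ℝ) : x * uI (n+1) x = 2*((n:ℝ)+1) * vI n x := by
  have hint : ∫ t in (-1:ℝ)..1,
      (x * (Real.exp (x*t) * (1-t^2)^(n+1)) - (2*((n:ℝ)+1)) * (t * (Real.exp (x*t) * (1-t^2)^n)))
      = (Real.exp (x*1) * (1-(1:ℝ)^2)^(n+1)) - (Real.exp (x*(-1)) * (1-(-1:ℝ)^2)^(n+1)) := by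
    apply intervalIntegral.integral_eq_sub_of_hasDerivAt (f := fun t => Real.exp (x*t) * (1-t^2)^(n+1))
    · intro t _; exact hd1 n x t
    · exact ((intg1 (n+1) x (-1) 1).const_mul x).sub ((intg2 n x (-1) 1).const_mul _)
  simp only [one_pow, neg_one_sq, sub_self, zero_pow (Nat.succ_ne_zero n), mul_zero] at hint
  rw [intervalIntegral.integral_sub ((intg1 (n+1) x (-1) 1).const_mul x) ((intg2 n x (-1) 1).const_mul _),
    intervalIntegral.integral_const_mul, intervalIntegral.integral_const_mul] at hint
  have : x * uI (n+1) x - 2*((n:ℝ)+1) * vI n x = 0 := hint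
  linarith

lemma parts2 (n : ℕ) (x : ℝ) : uI (n+1) x + x * vI (n+1) x = 2*((n:ℝ)+1) * wI n x := by
  have hint : ∫ t in (-1:ℝ)..1,
      ((Real.exp (x*t) * (1-t^2)^(n+1)) + x * (t * (Real.exp (x*t) * (1-t^2)^(n+1)))
        - (2*((n:ℝ)+1)) * (t^2 * (Real.exp (x*t) * (1-t^2)^n)))
      = (1 * (Real.exp (x*1) * (1-(1:ℝ)^2)^(n+1))) - ((-1) * (Real.exp (x*(-1)) * (1-(-1:ℝ)^2)^(n+1))) := by
    apply intervalIntegral.integral_eq_sub_of_hasDerivAt (f := fun t => t * (Real.exp (x*t) * (1-t^2)^(n+1)))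
    · intro t _; exact hd2 n x t
    · exact (((intg1 (n+1) x (-1) 1).add ((intg2 (n+1) x (-1) 1).const_mul x))).sub ((intg3 n x (-1) 1).const_mul _)
  simp only [one_pow, neg_one_sq, sub_self, zero_pow (Nat.succ_ne_zero n), mul_zero, one_mul, neg_zero] at hint
  rw [intervalIntegral.integral_sub ((intg1 (n+1) x (-1) 1).add ((intg2 (n+1) x (-1) 1).const_mul x)) ((intg3 n x (-1) 1).const_mul _),
    intervalIntegral.integral_add (intg1 (n+1) x (-1) 1) ((intg2 (n+1) x (-1) 1).const_mul x),
    intervalIntegral.integral_const_mul, intervalIntegral.integral_const_mul] at hint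
  have : uI (n+1) x + x * vI (n+1) x - 2*((n:ℝ)+1) * wI n x = 0 := hint
  linarith

lemma usplit (n : ℕ) (x : ℝ) : uI (n+1) x = uI n x - wI n x := by
  rw [uI, uI, wI, ← intervalIntegral.integral_sub (intg1 n x (-1) 1) (intg3 n x (-1) 1)]
  congr 1; funext t; ring

lemma urec (n : ℕ) (x : ℝ) :
    x^2 * uI (n+2) x = 4*((n:ℝ)+1)*((n:ℝ)+2) * uI n x - 2*((n:ℝ)+2)*(2*(n:ℝ)+3) * uI (n+1) x := by
  have h1 := parts1 (n+1) x
  have h2 := parts2 n x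
  have h3 := usplit n x
  have h1' : x * uI (n+2) x = 2*((n:ℝ)+2) * vI (n+1) x := by
    push_cast at h1; convert h1 using 2 <;> ring
  linear_combination x*h1' + (2*((n:ℝ)+2))*h2 + (4*((n:ℝ)+1)*((n:ℝ)+2))*h3



lemma u0 (x : ℝ) (hx : x ≠ 0) : uI 0 x = (Real.exp x - Real.exp (-x)) / x := by
  have hint : ∫ t in (-1:ℝ)..1, Real.exp (x*t) * (1-t^2)^0
      = Real.exp (x*1)/x - Real.exp (x*(-1))/x := by
    apply intervalIntegral.integral_eq_sub_of_hasDerivAt (f := fun t => Real.exp (x*t)/x)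
    · intro t _
      have h1 : HasDerivAt (fun t : ℝ => Real.exp (x*t)) (x * Real.exp (x*t)) t := by
        simpa [mul_comm, Function.comp_def] using (Real.hasDerivAt_exp (x*t)).comp t ((hasDerivAt_id t).const_mul x)
      have := h1.div_const x
      exact this.congr_deriv (by field_simp)
    · exact (by fun_prop : Continuous fun t : ℝ => Real.exp (x*t) * (1-t^2)^0).intervalIntegrable _ _
  rw [uI, hint]
  rw [mul_one, mul_neg_one]
  ring

lemma u1 (x : ℝ) (hx : x ≠ 0) :
    uI 1 x = (2/x^2) * (Real.exp x * (1 - 1/x) + Real.exp (-x) * (1 + 1/x)) := by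
  have hint : ∫ t in (-1:ℝ)..1, Real.exp (x*t) * (1-t^2)^1
      = (Real.exp (x*1) * ((1-(1:ℝ)^2)/x + 2*1/x^2 - 2/x^3))
        - (Real.exp (x*(-1)) * ((1-(-1:ℝ)^2)/x + 2*(-1)/x^2 - 2/x^3)) := by
    apply intervalIntegral.integral_eq_sub_of_hasDerivAt
      (f := fun t => Real.exp (x*t) * ((1-t^2)/x + 2*t/x^2 - 2/x^3))
    · intro t _
      have h1 : HasDerivAt (fun t : ℝ => Real.exp (x*t)) (x * Real.exp (x*t)) t := by
        simpa [mul_comm, Function.comp_def] using (Real.hasDerivAt_exp (x*t)).comp t ((hasDerivAt_id t).const_mul x)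
      have h2 : HasDerivAt (fun t : ℝ => (1-t^2)/x + 2*t/x^2 - 2/x^3) (-(2*t)/x + 2/x^2) t := by
        have ha : HasDerivAt (fun t : ℝ => 1-t^2) (-(2*t)) t := by
          simpa using ((hasDerivAt_pow 2 t).const_sub 1)
        have hb : HasDerivAt (fun t : ℝ => 2*t) 2 t := by
          simpa using (hasDerivAt_id t).const_mul 2
        exact ((ha.div_const x).add (hb.div_const (x^2))).sub_const _
      have := h1.fun_mul h2
      exact this.congr_deriv (by field_simp; ring)
    · exact (by fun_prop : Continuous fun t : ℝ => Real.exp (x*t) * (1-t^2)^1).intervalIntegrable _ _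
  rw [uI, hint]
  field_simp
  ring


lemma coeff_id (l m : ℕ) :
    ((Nat.factorial (2*l+m+4) : ℝ)) / ((Nat.factorial (l+1) : ℝ) * (Nat.factorial (m+2) : ℝ))
      = (Nat.factorial (2*l+m+2) : ℝ) / ((Nat.factorial (l+1) : ℝ) * (Nat.factorial m : ℝ))
        + 2*(2*((l:ℝ)+(m:ℝ)+1)+3) *
          ((Nat.factorial (2*l+m+2) : ℝ) / ((Nat.factorial l : ℝ) * (Nat.factorial (m+2) : ℝ))) := by
  have hA : ((2*l+m+4).factorial : ℝ)
      = ((2*(l:ℝ)+m+4) * (2*(l:ℝ)+m+3)) * ((2*l+m+2).factorial : ℝ) := by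
    have : (2*l+m+4) = (2*l+m+2) + 1 + 1 := by omega
    rw [this, Nat.factorial_succ, Nat.factorial_succ]
    push_cast; ring
  have hB : ((l+1).factorial : ℝ) = ((l:ℝ)+1) * (l.factorial : ℝ) := by
    rw [Nat.factorial_succ]; push_cast; ring
  have hC : ((m+2).factorial : ℝ) = (((m:ℝ)+2) * ((m:ℝ)+1)) * (m.factorial : ℝ) := by
    have : (m+2) = m + 1 + 1 := by omega
    rw [this, Nat.factorial_succ, Nat.factorial_succ]; push_cast; ring
  rw [hA, hB, hC]
  have e1 : (Nat.factorial l : ℝ) ≠ 0 := Nat.cast_ne_zero.mpr (Nat.factorial_ne_zero l)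
  have e2 : (Nat.factorial m : ℝ) ≠ 0 := Nat.cast_ne_zero.mpr (Nat.factorial_ne_zero m)
  have e3 : ((l:ℝ)+1) ≠ 0 := by positivity
  have e4 : ((m:ℝ)+1) ≠ 0 := by positivity
  have e5 : ((m:ℝ)+2) ≠ 0 := by positivity
  field_simp
  ring

noncomputable def S (n : ℕ) (z : ℝ) : ℝ :=
  ∑ l ∈ Finset.range (n+1),
    (Nat.factorial (n+l) : ℝ) / ((Nat.factorial l : ℝ) * (Nat.factorial (n-l) : ℝ)) * z^l

lemma Srec (n : ℕ) (z : ℝ) :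
    S (n+2) z = S n z + (2*(2*(n:ℝ)+3)) * z * S (n+1) z := by
  rw [S, S, S]
  rw [Finset.sum_range_succ' (fun l => (Nat.factorial (n+2+l) : ℝ) / ((Nat.factorial l : ℝ) * (Nat.factorial (n+2-l) : ℝ)) * z^l) (n+2)]
  rw [Finset.sum_range_succ' (fun l => (Nat.factorial (n+l) : ℝ) / ((Nat.factorial l : ℝ) * (Nat.factorial (n-l) : ℝ)) * z^l) n]
  have hz : (2*(2*(n:ℝ)+3)) * z *
      (∑ l ∈ Finset.range (n+2),
        (Nat.factorial (n+1+l) : ℝ) / ((Nat.factorial l : ℝ) * (Nat.factorial (n+1-l) : ℝ)) * z^l)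
      = ∑ l ∈ Finset.range (n+2),
        (2*(2*(n:ℝ)+3)) * ((Nat.factorial (n+1+l) : ℝ) / ((Nat.factorial l : ℝ) * (Nat.factorial (n+1-l) : ℝ))) * z^(l+1) := by
    rw [Finset.mul_sum]
    refine Finset.sum_congr rfl fun l _ => ?_
    ring
  rw [hz]
  -- constants at l = 0
  have hc2 : (Nat.factorial (n+2+0) : ℝ) / ((Nat.factorial 0 : ℝ) * (Nat.factorial (n+2-0) : ℝ)) * z^0 = 1 := by
    simp [Nat.factorial_ne_zero]
  have hc0 : (Nat.factorial (n+0) : ℝ) / ((Nat.factorial 0 : ℝ) * (Nat.factorial (n-0) : ℝ)) * z^0 = 1 := by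
    simp [Nat.factorial_ne_zero]
  rw [hc2, hc0]
  -- peel top two terms of the range (n+2) sums
  rw [Finset.sum_range_succ (fun l => (Nat.factorial (n+2+(l+1)) : ℝ) / ((Nat.factorial (l+1) : ℝ) * (Nat.factorial (n+2-(l+1)) : ℝ)) * z^(l+1)) (n+1)]
  rw [Finset.sum_range_succ (fun l => (Nat.factorial (n+2+(l+1)) : ℝ) / ((Nat.factorial (l+1) : ℝ) * (Nat.factorial (n+2-(l+1)) : ℝ)) * z^(l+1)) n]
  rw [Finset.sum_range_succ (fun l => (2*(2*(n:ℝ)+3)) * ((Nat.factorial (n+1+l) : ℝ) / ((Nat.factorial l : ℝ) * (Nat.factorial (n+1-l) : ℝ))) * z^(l+1)) (n+1)]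
  rw [Finset.sum_range_succ (fun l => (2*(2*(n:ℝ)+3)) * ((Nat.factorial (n+1+l) : ℝ) / ((Nat.factorial l : ℝ) * (Nat.factorial (n+1-l) : ℝ))) * z^(l+1)) n]
  have hedge1 :
      (Nat.factorial (n+2+(n+1)) : ℝ) / ((Nat.factorial (n+1) : ℝ) * (Nat.factorial (n+2-(n+1)) : ℝ)) * z^(n+1)
      = (2*(2*(n:ℝ)+3)) * ((Nat.factorial (n+1+n) : ℝ) / ((Nat.factorial n : ℝ) * (Nat.factorial (n+1-n) : ℝ))) * z^(n+1) := by
    have h1 : n+2+(n+1) = (2*n+1) + 1 + 1 := by omega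
    have h2 : n+1+n = 2*n+1 := by omega
    have h3 : n+2-(n+1) = 1 := by omega
    have h4 : n+1-n = 1 := by omega
    rw [h1, h2, h3, h4, Nat.factorial_succ (2*n+1+1), Nat.factorial_succ (2*n+1), Nat.factorial_succ n, Nat.factorial_one]
    have e1 : (Nat.factorial n : ℝ) ≠ 0 := Nat.cast_ne_zero.mpr (Nat.factorial_ne_zero n)
    have e2 : ((n:ℝ)+1) ≠ 0 := by positivity
    push_cast
    field_simp
    ring
  have hedge2 :
      (Nat.factorial (n+2+(n+1+1)) : ℝ) / ((Nat.factorial (n+1+1) : ℝ) * (Nat.factorial (n+2-(n+1+1)) : ℝ)) * z^(n+1+1)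
      = (2*(2*(n:ℝ)+3)) * ((Nat.factorial (n+1+(n+1)) : ℝ) / ((Nat.factorial (n+1) : ℝ) * (Nat.factorial (n+1-(n+1)) : ℝ))) * z^(n+1+1) := by
    have h1 : n+2+(n+1+1) = (2*n+2) + 1 + 1 := by omega
    have h2 : n+1+(n+1) = 2*n+2 := by omega
    have h3 : n+2-(n+1+1) = 0 := by omega
    have h4 : n+1-(n+1) = 0 := by omega
    have h5 : n+1+1 = (n+1)+1 := rfl
    rw [h1, h2, h3, h4, Nat.factorial_succ (2*n+2+1), Nat.factorial_succ (2*n+2), Nat.factorial_succ (n+1), Nat.factorial_succ n, Nat.factorial_zero]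
    have e1 : (Nat.factorial n : ℝ) ≠ 0 := Nat.cast_ne_zero.mpr (Nat.factorial_ne_zero n)
    have e2 : ((n:ℝ)+1) ≠ 0 := by positivity
    have e3 : ((n:ℝ)+2) ≠ 0 := by positivity
    push_cast
    field_simp
    ring
  have hmain : ∀ l ∈ Finset.range n,
      (Nat.factorial (n+2+(l+1)) : ℝ) / ((Nat.factorial (l+1) : ℝ) * (Nat.factorial (n+2-(l+1)) : ℝ)) * z^(l+1)
      = (Nat.factorial (n+(l+1)) : ℝ) / ((Nat.factorial (l+1) : ℝ) * (Nat.factorial (n-(l+1)) : ℝ)) * z^(l+1)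
        + (2*(2*(n:ℝ)+3)) * ((Nat.factorial (n+1+l) : ℝ) / ((Nat.factorial l : ℝ) * (Nat.factorial (n+1-l) : ℝ))) * z^(l+1) := by
    intro l hl
    rw [Finset.mem_range] at hl
    obtain ⟨m, rfl⟩ : ∃ m, n = l + m + 1 := ⟨n - l - 1, by omega⟩
    have h1 : l+m+1+2+(l+1) = 2*l+m+4 := by omega
    have h2 : l+m+1+2-(l+1) = m+2 := by omega
    have h3 : l+m+1+(l+1) = 2*l+m+2 := by omega
    have h4 : l+m+1-(l+1) = m := by omega
    have h5 : l+m+1+1+l = 2*l+m+2 := by omega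
    have h6 : l+m+1+1-l = m+2 := by omega
    rw [h1, h2, h3, h4, h5, h6]
    have := coeff_id l m
    have hcast : (2*(2*((l+m+1 : ℕ):ℝ)+3)) = 2*(2*((l:ℝ)+(m:ℝ)+1)+3) := by push_cast; ring
    rw [hcast]
    rw [this]
    ring
  rw [Finset.sum_congr rfl hmain]
  rw [Finset.sum_add_distrib]
  rw [hedge1, hedge2]
  ring

lemma sum_neg_eq (n : ℕ) (x : ℝ) :
    (∑ l ∈ Finset.range (n + 1),
      (-1 : ℝ) ^ l * (Nat.factorial (n + l) : ℝ) /
        ((Nat.factorial l : ℝ) * (Nat.factorial (n - l) : ℝ) * (2 * x) ^ l))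
    = S n (-(1/(2*x))) := by
  rw [S]
  refine Finset.sum_congr rfl fun l _ => ?_
  have h : (-(1/(2*x)))^l = (-1:ℝ)^l / (2*x)^l := by
    rw [← neg_div, div_pow]
  rw [h, div_eq_mul_inv, div_eq_mul_inv, div_eq_mul_inv, mul_inv, mul_inv]
  ring

lemma sum_pos_eq (n : ℕ) (x : ℝ) :
    (∑ l ∈ Finset.range (n + 1),
      (Nat.factorial (n + l) : ℝ) /
        ((Nat.factorial l : ℝ) * (Nat.factorial (n - l) : ℝ) * (2 * x) ^ l))
    = S n (1/(2*x)) := by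
  rw [S]
  refine Finset.sum_congr rfl fun l _ => ?_
  have h : ((1/(2*x)))^l = 1 / (2*x)^l := by
    rw [div_pow, one_pow]
  rw [h, div_eq_mul_inv, div_eq_mul_inv, div_eq_mul_inv, mul_inv, mul_inv]
  ring

lemma iBes_eq_S (n : ℕ) (x : ℝ) :
    iBes n x = (1/(2*x)) * (Real.exp x * S n (-(1/(2*x)))
      + (-1:ℝ)^(n+1) * Real.exp (-x) * S n (1/(2*x))) := by
  rw [iBes, sum_neg_eq, sum_pos_eq]

lemma iBes_rec (n : ℕ) (x : ℝ) (hx : x ≠ 0) :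
    iBes (n+2) x = iBes n x - ((2*(n:ℝ)+3)/x) * iBes (n+1) x := by
  have hm := Srec n (-(1/(2*x)))
  have hp := Srec n (1/(2*x))
  rw [iBes_eq_S, iBes_eq_S, iBes_eq_S]
  have e1 : (-1:ℝ)^(n+1+1) = -(-1:ℝ)^(n+1) := by rw [pow_succ]; ring
  have e2 : (-1:ℝ)^(n+2+1) = (-1:ℝ)^(n+1) := by
    rw [show n+2+1 = (n+1)+2 from rfl, pow_add]; ring
  rw [e1, e2, hm, hp]
  field_simp
  ring



lemma iBes0 (x : ℝ) (hx : x ≠ 0) :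
    iBes 0 x = x^(0:ℕ)/(2^(0+1) * (Nat.factorial 0 : ℝ)) * uI 0 x := by
  rw [u0 x hx]
  simp only [iBes, Finset.sum_range_one]
  norm_num
  field_simp
  ring

lemma iBes1 (x : ℝ) (hx : x ≠ 0) :
    iBes 1 x = x^(1:ℕ)/(2^(1+1) * (Nat.factorial 1 : ℝ)) * uI 1 x := by
  rw [u1 x hx]
  simp only [iBes, Finset.sum_range_succ, Finset.sum_range_zero]
  norm_num [Nat.factorial]
  field_simp
  ring

lemma formula (x : ℝ) (hx : x ≠ 0) (n : ℕ) :
    iBes n x = x^n/(2^(n+1) * (Nat.factorial n : ℝ)) * uI n x := by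
  have key : ∀ m : ℕ,
      (iBes m x = x^m/(2^(m+1) * (Nat.factorial m : ℝ)) * uI m x) ∧
      (iBes (m+1) x = x^(m+1)/(2^(m+2) * (Nat.factorial (m+1) : ℝ)) * uI (m+1) x) := by
    intro m
    induction m with
    | zero => exact ⟨iBes0 x hx, iBes1 x hx⟩
    | succ k ih =>
      refine ⟨ih.2, ?_⟩
      have hrec := iBes_rec k x hx
      have hu := urec k x
      rw [ih.1, ih.2] at hrec
      rw [hrec]
      have hfact2 : (Nat.factorial (k+2) : ℝ) = ((k:ℝ)+2) * ((k:ℝ)+1) * (Nat.factorial k : ℝ) := by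
        rw [Nat.factorial_succ, Nat.factorial_succ]; push_cast; ring
      have hfact1 : (Nat.factorial (k+1) : ℝ) = ((k:ℝ)+1) * (Nat.factorial k : ℝ) := by
        rw [Nat.factorial_succ]; push_cast; ring
      have ef : (Nat.factorial k : ℝ) ≠ 0 := Nat.cast_ne_zero.mpr (Nat.factorial_ne_zero k)
      have e1 : ((k:ℝ)+1) ≠ 0 := by positivity
      have e2 : ((k:ℝ)+2) ≠ 0 := by positivity
      have e3 : (2:ℝ)^(k+1) ≠ 0 := by positivity
      have e4 : x^k ≠ 0 := pow_ne_zero _ hx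
      -- express uI (k+2) via urec
      have hu2 : uI (k+2) x =
          (4*((k:ℝ)+1)*((k:ℝ)+2) * uI k x - 2*((k:ℝ)+2)*(2*(k:ℝ)+3) * uI (k+1) x)/x^2 := by
        field_simp at hu ⊢
        linarith [hu]
      rw [show k+1+1 = k+2 from rfl, hu2, hfact2, hfact1]
      field_simp
      ring
  exact (key n).1

lemma upos (n : ℕ) (x : ℝ) : 0 < uI n x := by
  rw [uI]
  apply intervalIntegral.intervalIntegral_pos_of_pos_on
  · exact intg1 n x (-1) 1
  · intro t ht
    have h1 : 0 < 1 - t^2 := by nlinarith [ht.1, ht.2]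
    positivity
  · norm_num

lemma csq (n : ℕ) (x : ℝ) : (vI n x)^2 < uI n x * wI n x := by
  set c : ℝ := vI n x / uI n x with hc
  have hu := upos n x
  have hexp : ∀ a b : ℝ, (∫ t in a..b, (t-c)^2 * (Real.exp (x*t) * (1-t^2)^n))
      = (∫ t in a..b, t^2 * (Real.exp (x*t) * (1-t^2)^n))
        - 2*c*(∫ t in a..b, t * (Real.exp (x*t) * (1-t^2)^n))
        + c^2*(∫ t in a..b, Real.exp (x*t) * (1-t^2)^n) := by
    intro a b
    rw [← intervalIntegral.integral_const_mul, ← intervalIntegral.integral_const_mul,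
      ← intervalIntegral.integral_sub (intg3 n x a b) ((intg2 n x a b).const_mul _),
      ← intervalIntegral.integral_add ((intg3 n x a b).sub ((intg2 n x a b).const_mul _))
        ((intg1 n x a b).const_mul _)]
    refine intervalIntegral.integral_congr fun t _ => ?_
    ring
  have hintg : ∀ a b : ℝ, IntervalIntegrable
      (fun t : ℝ => (t-c)^2 * (Real.exp (x*t) * (1-t^2)^n)) MeasureTheory.volume a b :=
    fun a b => (by fun_prop :
      Continuous fun t : ℝ => (t-c)^2 * (Real.exp (x*t) * (1-t^2)^n)).intervalIntegrable a b
  have hnn : ∀ a b : ℝ, a ≤ b → (-1:ℝ) ≤ a → b ≤ 1 →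
      0 ≤ ∫ t in a..b, (t-c)^2 * (Real.exp (x*t) * (1-t^2)^n) := by
    intro a b hab ha hb
    apply intervalIntegral.integral_nonneg hab
    intro t ht
    have h1 : (0:ℝ) ≤ 1 - t^2 := by nlinarith [ht.1, ht.2]
    exact mul_nonneg (sq_nonneg _) (mul_nonneg (Real.exp_pos _).le (pow_nonneg h1 n))
  have hposint : 0 < ∫ t in (-1:ℝ)..1, (t-c)^2 * (Real.exp (x*t) * (1-t^2)^n) := by
    have hsplit : (∫ t in (-1:ℝ)..1, (t-c)^2 * (Real.exp (x*t) * (1-t^2)^n))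
        = (∫ t in (-1:ℝ)..0, (t-c)^2 * (Real.exp (x*t) * (1-t^2)^n))
          + ∫ t in (0:ℝ)..1, (t-c)^2 * (Real.exp (x*t) * (1-t^2)^n) :=
      (intervalIntegral.integral_add_adjacent_intervals (hintg (-1) 0) (hintg 0 1)).symm
    rw [hsplit]
    rcases le_or_gt 0 c with hc0 | hc0
    · have hpos1 : 0 < ∫ t in (-1:ℝ)..0, (t-c)^2 * (Real.exp (x*t) * (1-t^2)^n) := by
        apply intervalIntegral.intervalIntegral_pos_of_pos_on (hintg (-1) 0)
        · intro t ht
          have h1 : 0 < 1 - t^2 := by nlinarith [ht.1, ht.2]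
          have h2 : (0:ℝ) < (t-c)^2 := by
            rw [sq]
            exact mul_pos_of_neg_of_neg (by linarith [ht.2]) (by linarith [ht.2])
          positivity
        · norm_num
      have := hnn 0 1 (by norm_num) (by norm_num) (by norm_num)
      linarith
    · have hpos1 : 0 < ∫ t in (0:ℝ)..1, (t-c)^2 * (Real.exp (x*t) * (1-t^2)^n) := by
        apply intervalIntegral.intervalIntegral_pos_of_pos_on (hintg 0 1)
        · intro t ht
          have h1 : 0 < 1 - t^2 := by nlinarith [ht.1, ht.2]
          have h2 : (0:ℝ) < (t-c)^2 := by
            rw [sq]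
            exact mul_pos (by linarith [ht.1]) (by linarith [ht.1])
          positivity
        · norm_num
      have := hnn (-1) 0 (by norm_num) (by norm_num) (by norm_num)
      linarith
  rw [hexp (-1) 1] at hposint
  have hcu : c * uI n x = vI n x := by
    rw [hc]
    field_simp
  -- 0 < wI - 2c vI + c² uI ; multiply by uI
  have : 0 < uI n x * (wI n x - 2*c*(vI n x) + c^2 * uI n x) := by
    apply mul_pos hu
    rw [wI, vI, uI]
    linarith [hposint]
  nlinarith [this, hcu]

end IBesAux

/-- For every integer `n ≥ 0` and every real `x > 0`,
`i_{n+1}(x)/i_n(x) < x/((n+1) + √((n+1)² + x²))`. -/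
theorem iBes_ratio_lt (n : ℕ) (x : ℝ) (hx : 0 < x) :
    iBes (n + 1) x / iBes n x
      < x / (((n : ℝ) + 1) + Real.sqrt (((n : ℝ) + 1) ^ 2 + x ^ 2)) := by
  have hx0 : x ≠ 0 := ne_of_gt hx
  set ν : ℝ := (n:ℝ) + 1 with hν
  set s : ℝ := Real.sqrt (ν^2 + x^2) with hsdef
  have hνpos : 0 < ν := by positivity
  have hs0 : 0 ≤ s := Real.sqrt_nonneg _
  have hs2 : s^2 = ν^2 + x^2 := Real.sq_sqrt (by positivity)
  have hspos : 0 < ν + s := by positivity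
  have hu0 : 0 < IBesAux.uI n x := IBesAux.upos n x
  have hu1 : 0 < IBesAux.uI (n+1) x := IBesAux.upos (n+1) x
  have hparts : x * IBesAux.uI (n+1) x = 2*ν * IBesAux.vI n x := IBesAux.parts1 n x
  have hsplit : IBesAux.uI (n+1) x = IBesAux.uI n x - IBesAux.wI n x := IBesAux.usplit n x
  have hcs : (IBesAux.vI n x)^2 < IBesAux.uI n x * IBesAux.wI n x := IBesAux.csq n x
  set u₀ := IBesAux.uI n x
  set u₁ := IBesAux.uI (n+1) x
  set v := IBesAux.vI n x
  set w := IBesAux.wI n x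
  have hvpos : 0 < v := by nlinarith [hparts, mul_pos hx hu1]
  -- the key quadratic inequality : x v² + 2 ν u₀ v - x u₀² < 0
  have hquad : x * v^2 + 2*ν*u₀*v - x*u₀^2 < 0 := by
    have hxw : x * w = x*u₀ - 2*ν*v := by
      linear_combination x*hsplit - hparts
    nlinarith [hcs, mul_pos hx (mul_pos hu0 hu0)]
  -- deduce v (ν + s) < x u₀
  have hkey : v * (ν + s) < x * u₀ := by
    have hA : 0 < x*u₀ - ν*v := by nlinarith [hvpos, hu0]
    have hAsq : (s*v)^2 < (x*u₀ - ν*v)^2 := by nlinarith [hquad, hvpos]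
    have hsv : s*v < x*u₀ - ν*v := by
      by_contra hcon
      push_neg at hcon
      have h1 : (x*u₀ - ν*v)^2 ≤ (s*v)^2 := by
        have h0 : 0 ≤ s*v := mul_nonneg hs0 (le_of_lt hvpos)
        nlinarith [hcon, hA]
      linarith [hAsq]
    nlinarith [hsv]
  -- rewrite the ratio
  rw [IBesAux.formula x hx0 (n+1), IBesAux.formula x hx0 n]
  have hfact1 : (Nat.factorial (n+1) : ℝ) = ν * (Nat.factorial n : ℝ) := by
    rw [Nat.factorial_succ]; push_cast [hν]; ring
  have ef : (Nat.factorial n : ℝ) ≠ 0 := Nat.cast_ne_zero.mpr (Nat.factorial_ne_zero n)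
  have e3 : (2:ℝ)^(n+1) ≠ 0 := by positivity
  have e4 : x^n ≠ 0 := pow_ne_zero _ hx0
  have hratio : x^(n+1)/(2^(n+1+1) * (Nat.factorial (n+1) : ℝ)) * u₁
      / (x^n/(2^(n+1) * (Nat.factorial n : ℝ)) * u₀) = v / u₀ := by
    rw [hfact1]
    have hu₁ : u₁ = 2*ν*v/x := by
      field_simp at hparts ⊢
      linarith [hparts]
    rw [hu₁]
    field_simp
    ring
  rw [hratio, div_lt_div_iff₀ hu0 hspos]
  linarith [hkey]
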